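/- There exists a sequence ζ : ℕ → ℝ with ζ_n → 0 as n → ∞ such that the following holds for every integer n ≥ 2. Let 𝒴 be the three-element alphabet {0, 1, ?}. Let P̃ be any probability mass function on 𝒴^n of the form P̃(y₁,…,y_n) = 𝟙{y₁ = 1} · Π_{i=2}^{n} P̃^{(i)}(y_i | y_{i−1}), where each P̃^{(i)}(· | ·) is a conditional probability mass function on 𝒴 given 𝒴 satisfying P̃^{(i)}(0 | 0) = 0. Then there exists a single (time-invariant) conditional probability mass function Q(· | ·) on 𝒴 given 𝒴 with Q(0 | 0) = 0 such that, defining the probability mass function Q̃ on 𝒴^n by Q̃(y₁,…,y_n) = Π_{i=1}^{n} Q(y_i | y_{i−1}) with the convention y₀ = 1, the Shannon entropies satisfy H(P̃) ≤ H(Q̃) + ζ_n. -/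

import Mathlib

/-- Shannon entropy (in bits) of a probability mass function on a finite type,
with the convention `0·log₂ 0 = 0` (automatic since `Real.logb 2 0 = 0`). -/
noncomputable def shannonEntropy {α : Type*} [Fintype α] (p : α → ℝ) : ℝ :=
  -∑ x, p x * Real.logb 2 (p x)

namespace EUB

noncomputable def lam : ℝ := 1 + Real.sqrt 3

lemma sqrt3_pos : (0:ℝ) < Real.sqrt 3 := Real.sqrt_pos.2 (by norm_num)
lemma sqrt3_sq : Real.sqrt 3 ^ 2 = 3 := Real.sq_sqrt (by norm_num)
lemma one_lt_sqrt3 : (1:ℝ) < Real.sqrt 3 := by nlinarith [sqrt3_sq, sqrt3_pos]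
lemma sqrt3_lt_two : Real.sqrt 3 < 2 := by nlinarith [sqrt3_sq, sqrt3_pos]
lemma lam_pos : (0:ℝ) < lam := by unfold lam; nlinarith [sqrt3_pos]
lemma two_lt_lam : (2:ℝ) < lam := by unfold lam; linarith [one_lt_sqrt3]
lemma lam_ne : lam ≠ 0 := ne_of_gt lam_pos

noncomputable def v : Fin 3 → ℝ := fun y => if y = 0 then Real.sqrt 3 - 1 else 1

lemma v_pos : ∀ y, 0 < v y := by
  intro y; unfold v; split <;> [linarith [one_lt_sqrt3]; norm_num]
lemma v_le_one : ∀ y, v y ≤ 1 := by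
  intro y; unfold v; split <;> [linarith [sqrt3_lt_two]; norm_num]
lemma v_ne : ∀ y, v y ≠ 0 := fun y => ne_of_gt (v_pos y)
lemma lam_mul_v0 : lam * v 0 = 2 := by
  have : v 0 = Real.sqrt 3 - 1 := by unfold v; norm_num
  rw [this]; unfold lam; nlinarith [sqrt3_sq]
lemma v_ge : ∀ y, 2 / lam ≤ v y := by
  have h0 : 2 / lam = Real.sqrt 3 - 1 := by
    rw [div_eq_iff lam_ne]
    have : v 0 = Real.sqrt 3 - 1 := by unfold v; norm_num
    rw [← this, ← lam_mul_v0]; ring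
  intro y
  fin_cases y <;> simp [v, h0] <;> linarith [sqrt3_lt_two]

noncomputable def Qk : Fin 3 → Fin 3 → ℝ := fun y y' =>
  if y' = 0 ∧ y = 0 then 0 else v y / (lam * v y')

lemma Qk_nonneg : ∀ y y', 0 ≤ Qk y y' := by
  intro y y'; unfold Qk; split
  · exact le_refl 0
  · exact div_nonneg (v_pos _).le (mul_nonneg lam_pos.le (v_pos _).le)

lemma Qk_le : ∀ y y', Qk y y' ≤ v y / (lam * v y') := by
  intro y y'; unfold Qk; split
  · exact div_nonneg (v_pos _).le (mul_nonneg lam_pos.le (v_pos _).le)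
  · exact le_refl _

lemma Qk_eq_of_allowed {y y' : Fin 3} (h : ¬(y' = 0 ∧ y = 0)) :
    Qk y y' = v y / (lam * v y') := by unfold Qk; rw [if_neg h]

lemma Qk_zero : Qk 0 0 = 0 := by unfold Qk; norm_num

lemma Qk_col_sum : ∀ y', ∑ y, Qk y y' = 1 := by
  have hv0 : v 0 = Real.sqrt 3 - 1 := by unfold v; norm_num
  have hv1 : v 1 = 1 := by unfold v; norm_num
  have hv2 : v 2 = 1 := by unfold v; norm_num [Fin.ext_iff]
  have h2 : lam * v 0 = 2 := lam_mul_v0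
  have hlam : lam = 1 + Real.sqrt 3 := rfl
  have h3 : Real.sqrt 3 - 1 ≠ 0 := by nlinarith [one_lt_sqrt3]
  have h4 : (1:ℝ) + Real.sqrt 3 ≠ 0 := by nlinarith [sqrt3_pos]
  intro y'
  fin_cases y' <;>
    simp [Fin.sum_univ_three, Qk, hv0, hv1, hv2] <;>
    rw [hlam] <;> field_simp <;> nlinarith [sqrt3_sq, sqrt3_pos, one_lt_sqrt3]

noncomputable def Fz (z : ℕ → Fin 3) (m : ℕ) : ℝ :=
  ∏ i ∈ Finset.range m, Qk (z i) (if i = 0 then 1 else z (i-1))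

lemma Fz_nonneg (z : ℕ → Fin 3) (m : ℕ) : 0 ≤ Fz z m :=
  Finset.prod_nonneg fun i _ => Qk_nonneg _ _

lemma Fz_le (z : ℕ → Fin 3) (m : ℕ) :
    Fz z m ≤ lam⁻¹ ^ m * v (if m = 0 then 1 else z (m-1)) := by
  induction m with
  | zero =>
    have : v 1 = 1 := by unfold v; norm_num [Fin.ext_iff]
    simp [Fz, this]
  | succ m ih =>
    have hpm : ((m+1) - 1 : ℕ) = m := by omega
    rw [Fz, Finset.prod_range_succ, ← Fz]
    set pm : Fin 3 := if m = 0 then 1 else z (m-1) with hpmdef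
    have h1 : Qk (z m) pm ≤ v (z m) / (lam * v pm) := Qk_le _ _
    have h2 : Fz z m * Qk (z m) pm ≤ (lam⁻¹ ^ m * v pm) * (v (z m) / (lam * v pm)) :=
      mul_le_mul ih h1 (Qk_nonneg _ _)
        (mul_nonneg (pow_nonneg (inv_nonneg.2 lam_pos.le) m) (v_pos pm).le)
    have h3 : (lam⁻¹ ^ m * v pm) * (v (z m) / (lam * v pm)) = lam⁻¹ ^ (m+1) * v (z m) := by
      field_simp [v_ne pm, lam_ne]
      rw [pow_succ, show lam * v (z m) * ((1 / lam) ^ m * (1 / lam)) = (lam * (1 / lam)) * ((1 / lam) ^ m * v (z m)) by ring, mul_one_div_cancel lam_ne, one_mul]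
    rw [if_neg (Nat.succ_ne_zero m), hpm]
    calc Fz z m * Qk (z m) pm ≤ _ := h2
    _ = _ := h3

noncomputable def Gz (z : ℕ → Fin 3) (m : ℕ) : ℝ :=
  ∏ i ∈ Finset.range m,
    if i = 0 then (if z 0 = 1 then 1 else 0) else Qk (z i) (z (i-1))

lemma Gz_eq (z : ℕ → Fin 3) (h0 : z 0 = 1) (m : ℕ) (hm : 1 ≤ m)
    (hall : ∀ i, 1 ≤ i → i < m → ¬(z i = 0 ∧ z (i-1) = 0)) :
    Gz z m = lam⁻¹ ^ (m-1) * v (z (m-1)) := by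
  induction m, hm using Nat.le_induction with
  | base =>
    have hv1 : v (1 : Fin 3) = 1 := by unfold v; norm_num [Fin.ext_iff]
    simp [Gz, h0, hv1]
  | succ m hm ih =>
    have hIH : Gz z m = lam⁻¹ ^ (m-1) * v (z (m-1)) :=
      ih (fun i h1 h2 => hall i h1 (by omega))
    rw [Gz, Finset.prod_range_succ, ← Gz, hIH, if_neg (by omega : ¬ m = 0)]
    rw [Qk_eq_of_allowed (fun hc => hall m hm (by omega) ⟨hc.2, hc.1⟩)]
    have hm1 : m - 1 + 1 = m := by omega
    have h3 : lam⁻¹ ^ (m-1) * v (z (m-1)) * (v (z m) / (lam * v (z (m-1))))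
        = lam⁻¹ ^ (m-1) * lam⁻¹ * v (z m) := by
      field_simp [v_ne (z (m-1)), lam_ne]
    rw [h3, ← pow_succ, hm1]
    norm_num

lemma cons_at {n : ℕ} (a : Fin 3) (g : Fin n → Fin 3) (k : ℕ) (hk : k < n + 1) (hk2 : k - 1 < n) :
    Fin.cons (α := fun _ => Fin 3) a g ⟨k, hk⟩ = if k = 0 then a else g ⟨k - 1, hk2⟩ := by
  cases k with
  | zero => simp
  | succ k =>
    have h : (⟨k+1, hk⟩ : Fin (n+1)) = Fin.succ ⟨k, by omega⟩ := rfl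
    rw [h, Fin.cons_succ]
    simp

lemma sum_prod_kernel : ∀ (n : ℕ) (K : ℕ → Fin 3 → Fin 3 → ℝ),
    (∀ i y', ∑ y, K i y y' = 1) → ∀ s : Fin 3,
    (∑ y : Fin n → Fin 3, ∏ i : Fin n,
      K i.val (y i) (if i.val = 0 then s
        else y ⟨i.val - 1, lt_of_le_of_lt (Nat.sub_le _ _) i.isLt⟩)) = 1 := by
  intro n
  induction n with
  | zero => intro K hK s; simp
  | succ n ih =>
    intro K hK s
    have key : ∀ (a : Fin 3) (g : Fin n → Fin 3),
        (∏ i : Fin (n+1), K i.val (Fin.cons (α := fun _ => Fin 3) a g i)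
          (if i.val = 0 then s
            else Fin.cons (α := fun _ => Fin 3) a g ⟨i.val - 1, lt_of_le_of_lt (Nat.sub_le _ _) i.isLt⟩))
        = K 0 a s * ∏ i : Fin n, K (i.val+1) (g i)
            (if i.val = 0 then a
              else g ⟨i.val - 1, lt_of_le_of_lt (Nat.sub_le _ _) i.isLt⟩) := by
      intro a g
      rw [Fin.prod_univ_succ]
      refine congrArg₂ (· * ·) (by simp) (Finset.prod_congr rfl fun i _ => ?_)
      have h2 : Fin.cons (α := fun _ => Fin 3) a g (Fin.succ i) = g i :=
        Fin.cons_succ (α := fun _ => Fin 3) a g i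
      have h5 : (⟨(Fin.succ i).val - 1, lt_of_le_of_lt (Nat.sub_le _ _) (Fin.succ i).isLt⟩ : Fin (n+1))
          = ⟨i.val, Nat.lt_succ_of_lt i.isLt⟩ := by apply Fin.ext; simp
      have hne : ¬ ((Fin.succ i).val = 0) := by simp [Fin.val_succ]
      rw [h2, if_neg hne, h5,
        cons_at a g i.val (Nat.lt_succ_of_lt i.isLt) (lt_of_le_of_lt (Nat.sub_le _ _) i.isLt)]
      simp [Fin.val_succ]
    rw [← Equiv.sum_comp (Fin.consEquiv (fun _ : Fin (n+1) => Fin 3)), Fintype.sum_prod_type]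
    simp only [Fin.consEquiv_apply]
    have inner : ∀ a : Fin 3,
        (∑ g : Fin n → Fin 3, ∏ i : Fin (n+1), K i.val (Fin.cons (α := fun _ => Fin 3) a g i)
          (if i.val = 0 then s
            else Fin.cons (α := fun _ => Fin 3) a g ⟨i.val - 1, lt_of_le_of_lt (Nat.sub_le _ _) i.isLt⟩)) = K 0 a s := by
      intro a
      have := ih (fun j => K (j+1)) (fun i y' => hK (i+1) y') a
      calc (∑ g : Fin n → Fin 3, ∏ i : Fin (n+1), K i.val (Fin.cons (α := fun _ => Fin 3) a g i)
          (if i.val = 0 then s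
            else Fin.cons (α := fun _ => Fin 3) a g ⟨i.val - 1, lt_of_le_of_lt (Nat.sub_le _ _) i.isLt⟩))
          = ∑ g : Fin n → Fin 3, K 0 a s * ∏ i : Fin n, K (i.val+1) (g i)
            (if i.val = 0 then a
              else g ⟨i.val - 1, lt_of_le_of_lt (Nat.sub_le _ _) i.isLt⟩) :=
            Finset.sum_congr rfl (fun g _ => key a g)
        _ = K 0 a s * ∑ g : Fin n → Fin 3, ∏ i : Fin n, K (i.val+1) (g i)
            (if i.val = 0 then a
              else g ⟨i.val - 1, lt_of_le_of_lt (Nat.sub_le _ _) i.isLt⟩) := by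
            rw [Finset.mul_sum]
        _ = K 0 a s * 1 := by rw [this]
        _ = K 0 a s := mul_one _
    calc _ = ∑ a : Fin 3, K 0 a s := Finset.sum_congr rfl (fun a _ => inner a)
    _ = 1 := hK 0 s

lemma gibbs {α : Type*} [Fintype α] (p q : α → ℝ)
    (hp0 : ∀ x, 0 ≤ p x) (hp1 : ∑ x, p x = 1)
    (hq0 : ∀ x, 0 ≤ q x) (hq1 : ∑ x, q x ≤ 1)
    (hsupp : ∀ x, 0 < p x → 0 < q x) :
    shannonEntropy p ≤ -∑ x, p x * Real.logb 2 (q x) := by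
  have hlog2 : (0:ℝ) < Real.log 2 := Real.log_pos one_lt_two
  have key : ∀ x, p x * Real.log (q x) - p x * Real.log (p x) ≤ q x - p x := by
    intro x
    rcases eq_or_lt_of_le (hp0 x) with h | h
    · rw [← h]; simp [hq0 x]
    · have hq := hsupp x h
      have h1 : Real.log (q x / p x) ≤ q x / p x - 1 :=
        Real.log_le_sub_one_of_pos (div_pos hq h)
      rw [Real.log_div (ne_of_gt hq) (ne_of_gt h)] at h1
      have h6 := mul_le_mul_of_nonneg_left h1 (le_of_lt h)
      calc p x * Real.log (q x) - p x * Real.log (p x)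
          = p x * (Real.log (q x) - Real.log (p x)) := by ring
        _ ≤ p x * (q x / p x - 1) := h6
        _ = q x - p x := by field_simp
  have hsum : (∑ x, p x * Real.log (q x)) - ∑ x, p x * Real.log (p x) ≤ 0 := by
    rw [← Finset.sum_sub_distrib]
    calc ∑ x, (p x * Real.log (q x) - p x * Real.log (p x))
        ≤ ∑ x, (q x - p x) := Finset.sum_le_sum fun x _ => key x
      _ = (∑ x, q x) - (∑ x, p x) := Finset.sum_sub_distrib _ _
      _ ≤ 1 - 1 := by rw [hp1]; linarith
      _ = 0 := by ring
  have hle : ∑ x, p x * Real.log (q x) ≤ ∑ x, p x * Real.log (p x) := by linarith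
  unfold shannonEntropy
  apply neg_le_neg
  calc ∑ x, p x * Real.logb 2 (q x)
      = (∑ x, p x * Real.log (q x)) / Real.log 2 := by
        rw [Finset.sum_div]; apply Finset.sum_congr rfl; intro x _; rw [Real.logb]; ring
    _ ≤ (∑ x, p x * Real.log (p x)) / Real.log 2 := by gcongr
    _ = ∑ x, p x * Real.logb 2 (p x) := by
      rw [Finset.sum_div]; apply Finset.sum_congr rfl; intro x _; rw [Real.logb]; ring

lemma entropy_ge {α : Type*} [Fintype α] (p : α → ℝ) (n : ℕ)
    (hp0 : ∀ x, 0 ≤ p x) (hp1 : ∑ x, p x = 1)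
    (hub : ∀ x, p x ≤ lam⁻¹ ^ n) :
    (n : ℝ) * Real.logb 2 lam ≤ shannonEntropy p := by
  unfold shannonEntropy
  have pointwise : ∀ x, p x * ((n:ℝ) * Real.logb 2 lam) ≤ -(p x * Real.logb 2 (p x)) := by
    intro x
    rcases eq_or_lt_of_le (hp0 x) with h | h
    · rw [← h]; simp
    · have h1 : Real.logb 2 (p x) ≤ Real.logb 2 (lam⁻¹ ^ n) :=
        Real.logb_le_logb_of_le one_lt_two h (hub x)
      have h2 : Real.logb 2 (lam⁻¹ ^ n) = -((n:ℝ) * Real.logb 2 lam) := by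
        rw [Real.logb_pow, Real.logb_inv]; ring
      have h3 : Real.logb 2 (p x) ≤ -((n:ℝ)*Real.logb 2 lam) := h2 ▸ h1
      nlinarith [mul_le_mul_of_nonneg_left h3 (le_of_lt h)]
  calc (n:ℝ) * Real.logb 2 lam
      = ∑ x, p x * ((n:ℝ) * Real.logb 2 lam) := by
        rw [← Finset.sum_mul, hp1, one_mul]
    _ ≤ ∑ x, -(p x * Real.logb 2 (p x)) := Finset.sum_le_sum fun x _ => pointwise x
    _ = -∑ x, p x * Real.logb 2 (p x) := by rw [Finset.sum_neg_distrib]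

noncomputable def KQ : ℕ → Fin 3 → Fin 3 → ℝ :=
  fun j a b => if j = 0 then (if a = 1 then (1:ℝ) else 0) else Qk a b

noncomputable def KP (n : ℕ) (P : Fin n → Fin 3 → Fin 3 → ℝ) : ℕ → Fin 3 → Fin 3 → ℝ :=
  fun j a b => if h : j < n then
    (if j = 0 then (if a = 1 then (1:ℝ) else 0) else P ⟨j, h⟩ a b)
  else (if a = 1 then (1:ℝ) else 0)

noncomputable def Qtil (n : ℕ) : (Fin n → Fin 3) → ℝ :=
  fun y => ∏ i : Fin n, Qk (y i)
    (if i.val = 0 then 1 else y ⟨i.val - 1, lt_of_le_of_lt (Nat.sub_le _ _) i.isLt⟩)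

noncomputable def Ptil (n : ℕ) (h0 : 0 < n) (P : Fin n → Fin 3 → Fin 3 → ℝ) :
    (Fin n → Fin 3) → ℝ :=
  fun y => (if y ⟨0, h0⟩ = 1 then (1:ℝ) else 0) *
    ∏ i : Fin n, if i.val = 0 then 1
      else P i (y i) (y ⟨i.val - 1, lt_of_le_of_lt (Nat.sub_le _ _) i.isLt⟩)

noncomputable def qtil (n : ℕ) : (Fin n → Fin 3) → ℝ :=
  fun y => ∏ i : Fin n, KQ i.val (y i)
    (if i.val = 0 then 1 else y ⟨i.val - 1, lt_of_le_of_lt (Nat.sub_le _ _) i.isLt⟩)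

lemma KQ_col_sum : ∀ i y', ∑ y, KQ i y y' = 1 := by
  intro i y'
  unfold KQ
  by_cases h : i = 0
  · simp [h, Fin.sum_univ_three]
  · simp only [if_neg h]; exact Qk_col_sum y'

lemma KQ_nonneg : ∀ i a b, 0 ≤ KQ i a b := by
  intro i a b; unfold KQ
  split
  · split <;> norm_num
  · exact Qk_nonneg a b

lemma KP_col_sum (n : ℕ) (P : Fin n → Fin 3 → Fin 3 → ℝ)
    (hP : ∀ i : Fin n, ∀ y' : Fin 3, (∀ y : Fin 3, 0 ≤ P i y y') ∧ (∑ y : Fin 3, P i y y') = 1) :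
    ∀ i y', ∑ y, KP n P i y y' = 1 := by
  intro i y'
  unfold KP
  by_cases h : i < n
  · by_cases h2 : i = 0
    · simp [h, h2, Fin.sum_univ_three]
    · simp only [dif_pos h, if_neg h2]; exact (hP ⟨i, h⟩ y').2
  · simp [h, Fin.sum_univ_three]

lemma Qtil_sum (n : ℕ) : ∑ y, Qtil n y = 1 := by
  have := sum_prod_kernel n (fun _ => Qk) (fun _ => Qk_col_sum) 1
  exact this

lemma qtil_sum (n : ℕ) : ∑ y, qtil n y = 1 := by
  have := sum_prod_kernel n KQ KQ_col_sum 1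
  exact this

lemma Qtil_nonneg (n : ℕ) : ∀ y, 0 ≤ Qtil n y :=
  fun y => Finset.prod_nonneg fun i _ => Qk_nonneg _ _

lemma qtil_nonneg (n : ℕ) : ∀ y, 0 ≤ qtil n y :=
  fun y => Finset.prod_nonneg fun i _ => KQ_nonneg _ _ _

lemma Qtil_le (n : ℕ) : ∀ y, Qtil n y ≤ lam⁻¹ ^ n := by
  intro y
  set z : ℕ → Fin 3 := fun k => if h : k < n then y ⟨k, h⟩ else 1 with hz
  have he : Qtil n y = Fz z n := by
    have hr : Fz z n = ∏ i : Fin n, Qk (z i.val) (if i.val = 0 then 1 else z (i.val - 1)) :=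
      (Fin.prod_univ_eq_prod_range _ n).symm
    rw [hr]
    unfold Qtil
    apply Finset.prod_congr rfl
    intro i _
    have h1 : z i.val = y i := by simp [hz, i.isLt]
    by_cases h2 : i.val = 0
    · rw [h1]; simp [h2]
    · have h3 : i.val - 1 < n := lt_of_le_of_lt (Nat.sub_le _ _) i.isLt
      have h4 : z (i.val - 1) = y ⟨i.val - 1, h3⟩ := by simp [hz, h3]
      rw [h1, if_neg h2, if_neg h2, h4]
  rw [he]
  calc Fz z n ≤ lam⁻¹ ^ n * v (if n = 0 then 1 else z (n-1)) := Fz_le z n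
    _ ≤ lam⁻¹ ^ n * 1 :=
        mul_le_mul_of_nonneg_left (v_le_one _) (pow_nonneg (inv_nonneg.2 lam_pos.le) n)
    _ = lam⁻¹ ^ n := mul_one _

lemma Qtil_entropy (n : ℕ) : (n:ℝ) * Real.logb 2 lam ≤ shannonEntropy (Qtil n) :=
  entropy_ge (Qtil n) n (Qtil_nonneg n) (Qtil_sum n) (Qtil_le n)

lemma Ptil_nonneg (n : ℕ) (h0 : 0 < n) (P : Fin n → Fin 3 → Fin 3 → ℝ)
    (hP : ∀ i : Fin n, ∀ y' : Fin 3, (∀ y : Fin 3, 0 ≤ P i y y') ∧ (∑ y : Fin 3, P i y y') = 1) :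
    ∀ y, 0 ≤ Ptil n h0 P y := by
  intro y
  unfold Ptil
  apply mul_nonneg
  · split <;> norm_num
  · apply Finset.prod_nonneg
    intro i _
    split
    · norm_num
    · exact (hP i _).1 _

lemma Ptil_eq_prod (m : ℕ) (h0 : 0 < m + 1) (P : Fin (m+1) → Fin 3 → Fin 3 → ℝ) :
    ∀ y, Ptil (m+1) h0 P y = ∏ i : Fin (m+1), KP (m+1) P i.val (y i)
      (if i.val = 0 then 1 else y ⟨i.val - 1, lt_of_le_of_lt (Nat.sub_le _ _) i.isLt⟩) := by
  intro y
  unfold Ptil KP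
  rw [Fin.prod_univ_succ, Fin.prod_univ_succ]
  have hy0 : y ⟨0, h0⟩ = y 0 := rfl
  simp only [Fin.val_zero, if_true, ite_true, eq_self_iff_true, one_mul,
    dif_pos (Nat.succ_pos m), Fin.val_succ, hy0]
  congr 1
  apply Finset.prod_congr rfl
  intro i _
  have hne : ¬ (i.val + 1 = 0) := Nat.succ_ne_zero _
  have hlt : i.val + 1 < m + 1 := by omega
  rw [if_neg hne, dif_pos hlt, if_neg hne]
  rfl

lemma Ptil_sum (m : ℕ) (h0 : 0 < m + 1) (P : Fin (m+1) → Fin 3 → Fin 3 → ℝ)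
    (hP : ∀ i : Fin (m+1), ∀ y' : Fin 3, (∀ y : Fin 3, 0 ≤ P i y y') ∧ (∑ y : Fin 3, P i y y') = 1) :
    ∑ y, Ptil (m+1) h0 P y = 1 := by
  have h1 : ∀ y : Fin (m+1) → Fin 3, Ptil (m+1) h0 P y = ∏ i : Fin (m+1), KP (m+1) P i.val (y i)
      (if i.val = 0 then 1 else y ⟨i.val - 1, lt_of_le_of_lt (Nat.sub_le _ _) i.isLt⟩) :=
    Ptil_eq_prod m h0 P
  rw [Finset.sum_congr rfl (fun y _ => h1 y)]
  exact sum_prod_kernel (m+1) (KP (m+1) P) (KP_col_sum (m+1) P hP) 1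

lemma Ptil_supp (n : ℕ) (h0 : 0 < n) (P : Fin n → Fin 3 → Fin 3 → ℝ)
    (hP00 : ∀ i : Fin n, P i 0 0 = 0) :
    ∀ y, 0 < Ptil n h0 P y → y ⟨0, h0⟩ = 1 ∧ ∀ i : Fin n, ¬ (i.val = 0) →
      ¬(y i = 0 ∧ y ⟨i.val - 1, lt_of_le_of_lt (Nat.sub_le _ _) i.isLt⟩ = 0) := by
  intro y hy
  unfold Ptil at hy
  by_cases h1 : y ⟨0, h0⟩ = 1
  · refine ⟨h1, ?_⟩
    rw [if_pos h1, one_mul] at hy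
    intro i hi hc
    have hfac := Finset.prod_ne_zero_iff.mp (ne_of_gt hy) i (Finset.mem_univ i)
    rw [if_neg hi, hc.1, hc.2] at hfac
    exact hfac (hP00 i)
  · rw [if_neg h1, zero_mul] at hy
    exact absurd hy (lt_irrefl 0)

lemma qtil_lower (n : ℕ) (hn : 2 ≤ n) (h0 : 0 < n) (P : Fin n → Fin 3 → Fin 3 → ℝ)
    (hP00 : ∀ i : Fin n, P i 0 0 = 0) :
    ∀ y, 0 < Ptil n h0 P y → 2 * lam⁻¹ ^ n ≤ qtil n y := by
  intro y hy
  obtain ⟨h1, hall⟩ := Ptil_supp n h0 P hP00 y hy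
  set z : ℕ → Fin 3 := fun k => if h : k < n then y ⟨k, h⟩ else 1 with hz
  have hz0 : z 0 = 1 := by
    have : z 0 = y ⟨0, h0⟩ := by simp [hz, h0]
    rw [this, h1]
  have heq : qtil n y = Gz z n := by
    have hr : Gz z n = ∏ i : Fin n,
        (if i.val = 0 then (if z 0 = 1 then (1:ℝ) else 0) else Qk (z i.val) (z (i.val - 1))) :=
      (Fin.prod_univ_eq_prod_range _ n).symm
    rw [hr]
    unfold qtil KQ
    apply Finset.prod_congr rfl
    intro i _
    have hzy : z i.val = y i := by simp [hz, i.isLt]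
    by_cases h2 : i.val = 0
    · rw [if_pos h2, if_pos h2, hz0]
      have hyy : y i = y ⟨0, h0⟩ := by congr 1; apply Fin.ext; exact h2
      rw [hyy, h1]
    · have h3 : i.val - 1 < n := lt_of_le_of_lt (Nat.sub_le _ _) i.isLt
      have h4 : z (i.val - 1) = y ⟨i.val - 1, h3⟩ := by simp [hz, h3]
      rw [if_neg h2, if_neg h2, if_neg h2, hzy, h4]
  have hallz : ∀ i, 1 ≤ i → i < n → ¬(z i = 0 ∧ z (i-1) = 0) := by
    intro k hk1 hkn hc
    have hzk : z k = y ⟨k, hkn⟩ := by simp [hz, hkn]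
    have h3 : k - 1 < n := lt_of_le_of_lt (Nat.sub_le _ _) hkn
    have hzk1 : z (k-1) = y ⟨k - 1, h3⟩ := by simp [hz, h3]
    have hk0 : ¬ ((⟨k, hkn⟩ : Fin n).val = 0) := by
      simp only [Fin.val_mk]; omega
    exact hall ⟨k, hkn⟩ hk0 ⟨by rw [← hzk]; exact hc.1, by rw [← hzk1]; exact hc.2⟩
  have hGz := Gz_eq z hz0 n (by omega) hallz
  rw [heq, hGz]
  have hvge := v_ge (z (n-1))
  have hpow : lam⁻¹ ^ (n-1) * (2 / lam) = 2 * lam⁻¹ ^ n := by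
    have h4 : lam⁻¹ ^ (n-1) * lam⁻¹ = lam⁻¹ ^ n := by
      rw [← pow_succ]; congr 1; omega
    rw [div_eq_mul_inv, ← h4]; ring
  calc 2 * lam⁻¹ ^ n = lam⁻¹ ^ (n-1) * (2 / lam) := hpow.symm
    _ ≤ lam⁻¹ ^ (n-1) * v (z (n-1)) :=
        mul_le_mul_of_nonneg_left hvge (pow_nonneg (inv_nonneg.2 lam_pos.le) _)

lemma main (n : ℕ) (hn : 2 ≤ n) (P : Fin n → Fin 3 → Fin 3 → ℝ)
    (hP : ∀ i : Fin n, ∀ y' : Fin 3, (∀ y : Fin 3, 0 ≤ P i y y') ∧ (∑ y : Fin 3, P i y y') = 1)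
    (hP00 : ∀ i : Fin n, P i 0 0 = 0) (h0 : 0 < n) :
    shannonEntropy (Ptil n h0 P) ≤ shannonEntropy (Qtil n) := by
  obtain ⟨m, rfl⟩ : ∃ m, n = m + 1 := ⟨n - 1, by omega⟩
  have hPt1 : ∑ y, Ptil (m+1) h0 P y = 1 := Ptil_sum m h0 P hP
  have hPt0 : ∀ y, 0 ≤ Ptil (m+1) h0 P y := Ptil_nonneg (m+1) h0 P hP
  have hlow : ∀ y, 0 < Ptil (m+1) h0 P y → 2 * lam⁻¹ ^ (m+1) ≤ qtil (m+1) y :=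
    qtil_lower (m+1) hn h0 P hP00
  have h2pos : (0:ℝ) < 2 * lam⁻¹ ^ (m+1) := by
    have := lam_pos
    positivity
  have step1 : shannonEntropy (Ptil (m+1) h0 P) ≤
      -∑ y, Ptil (m+1) h0 P y * Real.logb 2 (qtil (m+1) y) :=
    gibbs _ _ hPt0 hPt1 (qtil_nonneg (m+1)) (le_of_eq (qtil_sum (m+1)))
      (fun y hy => lt_of_lt_of_le h2pos (hlow y hy))
  have step2 : -∑ y, Ptil (m+1) h0 P y * Real.logb 2 (qtil (m+1) y) ≤
      ((m+1:ℕ):ℝ) * Real.logb 2 lam - 1 := by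
    have hpt : ∀ y, -(Ptil (m+1) h0 P y * Real.logb 2 (qtil (m+1) y)) ≤
        Ptil (m+1) h0 P y * (((m+1:ℕ):ℝ) * Real.logb 2 lam - 1) := by
      intro y
      rcases eq_or_lt_of_le (hPt0 y) with h | h
      · rw [← h]; simp
      · have hql := hlow y h
        have hlb : Real.logb 2 (2 * lam⁻¹ ^ (m+1)) ≤ Real.logb 2 (qtil (m+1) y) :=
          Real.logb_le_logb_of_le one_lt_two h2pos hql
        have hval : Real.logb 2 (2 * lam⁻¹ ^ (m+1)) = 1 - ((m+1:ℕ):ℝ) * Real.logb 2 lam := by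
          rw [Real.logb_mul (by norm_num) (by have := lam_pos; positivity),
            Real.logb_pow, Real.logb_inv, Real.logb_self_eq_one one_lt_two]
          push_cast
          ring
        rw [hval] at hlb
        nlinarith [mul_le_mul_of_nonneg_left hlb (le_of_lt h)]
    calc -∑ y, Ptil (m+1) h0 P y * Real.logb 2 (qtil (m+1) y)
        = ∑ y, -(Ptil (m+1) h0 P y * Real.logb 2 (qtil (m+1) y)) :=
          (Finset.sum_neg_distrib _).symm
      _ ≤ ∑ y, Ptil (m+1) h0 P y * (((m+1:ℕ):ℝ) * Real.logb 2 lam - 1) :=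
          Finset.sum_le_sum fun y _ => hpt y
      _ = ((m+1:ℕ):ℝ) * Real.logb 2 lam - 1 := by
          rw [← Finset.sum_mul, hPt1, one_mul]
  have step3 : ((m+1:ℕ):ℝ) * Real.logb 2 lam ≤ shannonEntropy (Qtil (m+1)) :=
    Qtil_entropy (m+1)
  linarith

end EUB

/-- The alphabet is `Fin 3 = {0, 1, ?}` (with `2` playing the role of `?`).
There exists a sequence `ζ : ℕ → ℝ` with `ζ_n → 0` such that for every `n ≥ 2` and every
family of conditional pmfs `P^{(i)}(·|·)` on `Fin 3` with `P^{(i)}(0|0) = 0`, defining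
`P̃(y₁,…,y_n) = 𝟙{y₁ = 1}·Π_{i=2}^{n} P^{(i)}(y_i | y_{i−1})`, there is a single
time-invariant conditional pmf `Q(·|·)` with `Q(0|0) = 0` such that, with
`Q̃(y₁,…,y_n) = Π_{i=1}^{n} Q(y_i | y_{i−1})` (convention `y₀ = 1`), the Shannon
entropies satisfy `H(P̃) ≤ H(Q̃) + ζ_n`. -/
theorem entropy_upper_bound_by_time_invariant_markov :
    ∃ ζ : ℕ → ℝ, Filter.Tendsto ζ Filter.atTop (nhds 0) ∧
      ∀ n : ℕ, ∀ hn : 2 ≤ n,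
      ∀ P : Fin n → Fin 3 → Fin 3 → ℝ,
        (∀ i : Fin n, ∀ y' : Fin 3, (∀ y : Fin 3, 0 ≤ P i y y') ∧ (∑ y : Fin 3, P i y y') = 1) →
        (∀ i : Fin n, P i 0 0 = 0) →
        ∃ Q : Fin 3 → Fin 3 → ℝ,
          (∀ y' : Fin 3, (∀ y : Fin 3, 0 ≤ Q y y') ∧ (∑ y : Fin 3, Q y y') = 1) ∧
          Q 0 0 = 0 ∧
          shannonEntropy (fun y : Fin n → Fin 3 =>
              (if y ⟨0, by omega⟩ = 1 then (1 : ℝ) else 0) *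
                ∏ i : Fin n, if i.val = 0 then 1
                  else P i (y i) (y ⟨i.val - 1, lt_of_le_of_lt (Nat.sub_le _ _) i.isLt⟩))
            ≤ shannonEntropy (fun y : Fin n → Fin 3 =>
                ∏ i : Fin n, Q (y i)
                  (if i.val = 0 then 1
                   else y ⟨i.val - 1, lt_of_le_of_lt (Nat.sub_le _ _) i.isLt⟩)) + ζ n := by

  refine ⟨fun _ => 0, tendsto_const_nhds, ?_⟩
  intro n hn P hP hP00
  refine ⟨EUB.Qk, fun y' => ⟨fun y => EUB.Qk_nonneg y y', EUB.Qk_col_sum y'⟩, EUB.Qk_zero, ?_⟩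
  have h := EUB.main n hn P hP hP00 (by omega)
  show _ ≤ _ + (0:ℝ)
  rw [add_zero]
  exact h
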